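/- Assume Γ is unitrivalent. The quotient of the abelian group of twisted 1-cocycles (under pointwise multiplication) by the subgroup of coboundaries is isomorphic, as an abelian group, to the product over all orbits O of the action of Z(Γ) on QCG_k(Γ; j') of the character groups Hom(Stab(O), ℂˣ), where Stab(O) = {λ ∈ Z(Γ) | λ·j = j} for any j ∈ O (this subgroup is independent of the choice of j ∈ O because Z(Γ) is abelian). -/

import Mathlib

open scoped BigOperators

set_option linter.unusedSectionVars false
set_option linter.unreachableTactic false
set_option linter.unusedTactic false

variable {V E : Type*} [Fintype V] [Fintype E] [DecidableEq V] [DecidableEq E]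

/-- The multiset of edge-ends at a vertex `v`: each edge `e` contributes one end for
`s e = v` and one end for `t e = v`, so a loop at `v` contributes twice. -/
def endsAt (s t : E → V) (v : V) : Multiset E :=
  (Finset.univ.filter fun e => s e = v).val + (Finset.univ.filter fun e => t e = v).val

/-- The degree of a vertex (a loop counts twice). -/
def degree (s t : E → V) (v : V) : ℕ := Multiset.card (endsAt s t v)

/-- A graph is unitrivalent if every vertex has degree `1` or `3`. -/
def Unitrivalent (s t : E → V) : Prop := ∀ v, degree s t v = 1 ∨ degree s t v = 3

/-- The cycle space `Z(Γ)`: the `ZMod 2`-valued functions on edges whose total value over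
the edge-ends at every vertex is `0`.  It plays the role of `H₁(Γ; ℤ/2)`. -/
def cycleSpace (s t : E → V) : AddSubgroup (E → ZMod 2) where
  carrier := {x | ∀ v, ((endsAt s t v).map x).sum = 0}
  zero_mem' := by intro v; simp
  add_mem' := by
    intro a b ha hb v
    have h : ((endsAt s t v).map (a + b)).sum
        = ((endsAt s t v).map a).sum + ((endsAt s t v).map b).sum := by
      rw [show ((a + b : E → ZMod 2)) = fun e => a e + b e from rfl]
      rw [Multiset.sum_map_add]
    rw [h, ha v, hb v, add_zero]
  neg_mem' := by
    intro a ha v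
    have h : (-a : E → ZMod 2) = a := funext fun e => by
      have h2 : ∀ x : ZMod 2, -x = x := by decide
      exact h2 (a e)
    rw [h]; exact ha v

/-- A weight of level `k`: each edge gets a value in `{0, 1/2, 1, …, k/2}`. -/
def IsWeight (k : ℕ) (j : E → ℚ) : Prop := ∀ f, ∃ m : ℕ, m ≤ k ∧ j f = (m : ℚ) / 2

/-- The set `QCG_k(Γ; j')` of admissible weights of level `k` with boundary values `j'`:
weights agreeing with `j'` on edges with a univalent endpoint and satisfying the quantum
Clebsch–Gordan condition at every trivalent vertex (a loop contributes its weight twice;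
the condition `2x ≤ a+b+c` for each of the three end-weights `x` is the triangle
inequality). -/
def QCG (s t : E → V) (k : ℕ) (j' : E → ℚ) : Set (E → ℚ) :=
  {j | IsWeight k j ∧
    (∀ f, (degree s t (s f) = 1 ∨ degree s t (t f) = 1) → j f = j' f) ∧
    (∀ v, degree s t v = 3 →
      (∃ m : ℤ, ((endsAt s t v).map j).sum = (m : ℚ)) ∧
      (∀ x ∈ (endsAt s t v).map j, 2 * x ≤ ((endsAt s t v).map j).sum) ∧
      ((endsAt s t v).map j).sum ≤ (k : ℚ))}

/-- The action of a cycle `lam` on a weight `j`: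
`(lam · j) f = k/2 - j f` if `lam f = 1` and `(lam · j) f = j f` otherwise. -/
def actW (k : ℕ) (lam : E → ZMod 2) (j : E → ℚ) : E → ℚ :=
  fun f => if lam f = 1 then (k : ℚ) / 2 - j f else j f

theorem actW_zero (k : ℕ) (j : E → ℚ) : actW k (0 : E → ZMod 2) j = j := by
  funext f
  simp [actW]

theorem actW_add (k : ℕ) (l l' : E → ZMod 2) (j : E → ℚ) :
    actW k (l + l') j = actW k l (actW k l' j) := by
  funext f
  have h : ∀ x : ZMod 2, x = 0 ∨ x = 1 := by decide
  simp only [actW, Pi.add_apply]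
  rcases h (l f) with h1 | h1 <;> rcases h (l' f) with h2 | h2 <;>
    simp [h1, h2] <;> ring

theorem add_self_zmod2 (l : E → ZMod 2) : l + l = 0 := by
  funext f
  have h : ∀ x : ZMod 2, x + x = 0 := by decide
  exact h (l f)

/-- A vertex `v` lies on the cycle `lam` if some edge of `lam` has `v` as an endpoint. -/
def LiesOn (s t : E → V) (lam : E → ZMod 2) (v : V) : Prop :=
  ∃ e, lam e = 1 ∧ (s e = v ∨ t e = v)

/-- An edge `f` is `lam`-external if `lam` does not pass through `f` and exactly one of
its endpoints lies on `lam`. -/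
def IsExternal (s t : E → V) (lam : E → ZMod 2) (f : E) : Prop :=
  lam f = 0 ∧ Xor' (LiesOn s t lam (s f)) (LiesOn s t lam (t f))

/-- `Ex(lam)`: the finite set of `lam`-external edges. -/
noncomputable def Ex (s t : E → V) (lam : E → ZMod 2) : Finset E :=
  letI := Classical.decPred (IsExternal s t lam)
  Finset.univ.filter (IsExternal s t lam)

/-- A twisted 1-cocycle `δ : Z(Γ) → (QCG_k(Γ; j') → ℂˣ)` (encoded as a function on all of
`(E → ZMod 2) × (E → ℚ)`, constrained only on `Z(Γ) × QCG_k(Γ; j')`). -/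
def IsCocycle (s t : E → V) (k : ℕ) (j' : E → ℚ)
    (δ : (E → ZMod 2) → (E → ℚ) → ℂˣ) : Prop :=
  ∀ lam ∈ cycleSpace s t, ∀ lam' ∈ cycleSpace s t, ∀ j ∈ QCG s t k j',
    δ (lam + lam') j = δ lam (actW k lam' j) * δ lam' j

/-- A coboundary. -/
def IsCoboundary (s t : E → V) (k : ℕ) (j' : E → ℚ)
    (δ : (E → ZMod 2) → (E → ℚ) → ℂˣ) : Prop :=
  ∃ c : (E → ℚ) → ℂˣ, ∀ lam ∈ cycleSpace s t, ∀ j ∈ QCG s t k j',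
    δ lam j = c (actW k lam j) * (c j)⁻¹

/-- The external edge condition. -/
def ExtCond (s t : E → V) (k : ℕ) (j' : E → ℚ)
    (δ : (E → ZMod 2) → (E → ℚ) → ℂˣ) : Prop :=
  ∀ lam ∈ cycleSpace s t, ∀ j ∈ QCG s t k j', actW k lam j = j →
    (δ lam j : ℂ) =
      Complex.exp (Real.pi * Complex.I * ((∑ f ∈ Ex s t lam, j f : ℚ) : ℂ))

/-- The stabilizer `Stab(j) = {lam ∈ Z(Γ) | lam · j = j}`, as a subgroup of the group of
`ZMod 2`-valued functions on edges. -/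
def stab (s t : E → V) (k : ℕ) (j : E → ℚ) : AddSubgroup (E → ZMod 2) where
  carrier := {lam | lam ∈ cycleSpace s t ∧ actW k lam j = j}
  zero_mem' := ⟨(cycleSpace s t).zero_mem, actW_zero k j⟩
  add_mem' := by
    rintro a b ⟨ha1, ha2⟩ ⟨hb1, hb2⟩
    exact ⟨add_mem ha1 hb1, by rw [actW_add, hb2, ha2]⟩
  neg_mem' := by
    rintro a ⟨ha1, ha2⟩
    have h : (-a : E → ZMod 2) = a := funext fun e => by
      have h2 : ∀ x : ZMod 2, -x = x := by decide
      exact h2 (a e)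
    rw [h]
    exact ⟨ha1, ha2⟩

/-- The abelian group of twisted 1-cocycles under pointwise multiplication. -/
def Coc (s t : E → V) (k : ℕ) (j' : E → ℚ) :
    Subgroup ((E → ZMod 2) → (E → ℚ) → ℂˣ) where
  carrier := {δ | IsCocycle s t k j' δ}
  one_mem' := by intro lam _ lam' _ j _; simp
  mul_mem' := by
    intro δ₁ δ₂ h1 h2 lam hlam lam' hlam' j hj
    simp only [Pi.mul_apply]
    rw [h1 lam hlam lam' hlam' j hj, h2 lam hlam lam' hlam' j hj, mul_mul_mul_comm]
  inv_mem' := by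
    intro δ h lam hlam lam' hlam' j hj
    simp only [Pi.inv_apply]
    rw [h lam hlam lam' hlam' j hj, mul_inv]

/-- The subgroup of coboundaries inside the group of twisted 1-cocycles. -/
def Cob (s t : E → V) (k : ℕ) (j' : E → ℚ) : Subgroup ↥(Coc s t k j') where
  carrier := {δ | IsCoboundary s t k j' (δ : (E → ZMod 2) → (E → ℚ) → ℂˣ)}
  one_mem' := ⟨1, by intro lam _ j _; simp⟩
  mul_mem' := by
    rintro δ₁ δ₂ ⟨c₁, h1⟩ ⟨c₂, h2⟩
    refine ⟨c₁ * c₂, fun lam hlam j hj => ?_⟩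
    have e1 := h1 lam hlam j hj
    have e2 := h2 lam hlam j hj
    simp only [Subgroup.coe_mul, Pi.mul_apply, mul_inv] at *
    rw [e1, e2, mul_mul_mul_comm]
  inv_mem' := by
    rintro δ ⟨c, h⟩
    refine ⟨c⁻¹, fun lam hlam j hj => ?_⟩
    have e := h lam hlam j hj
    simp only [Subgroup.coe_inv, Pi.inv_apply, mul_inv, inv_inv] at *
    rw [e, mul_inv, inv_inv]

/-- Two admissible weights are equivalent if they lie in the same orbit of the action of
the cycle space. -/
def orbitSetoid (s t : E → V) (k : ℕ) (j' : E → ℚ) : Setoid ↥(QCG s t k j') where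
  r j₁ j₂ := ∃ lam ∈ cycleSpace s t, actW k lam (j₁ : E → ℚ) = (j₂ : E → ℚ)
  iseqv := by
    constructor
    · intro j
      exact ⟨0, (cycleSpace s t).zero_mem, actW_zero k _⟩
    · rintro j₁ j₂ ⟨lam, hlam, h⟩
      exact ⟨lam, hlam, by rw [← h, ← actW_add, add_self_zmod2, actW_zero]⟩
    · rintro j₁ j₂ j₃ ⟨l1, h1, e1⟩ ⟨l2, h2, e2⟩
      exact ⟨l2 + l1, add_mem h2 h1, by rw [actW_add, e1, e2]⟩

theorem stab_congr (s t : E → V) (k : ℕ) (j₁ j₂ : E → ℚ)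
    (lam : E → ZMod 2) (h : actW k lam j₁ = j₂) :
    stab s t k j₁ = stab s t k j₂ := by
  have hinv : actW k lam j₂ = j₁ := by
    rw [← h, ← actW_add, add_self_zmod2, actW_zero]
  ext mu
  constructor
  · rintro ⟨h1, h2⟩
    exact ⟨h1, by rw [← h, ← actW_add, add_comm, actW_add, h2, h]⟩
  · rintro ⟨h1, h2⟩
    exact ⟨h1, by rw [← hinv, ← actW_add, add_comm, actW_add, h2, hinv]⟩

/-- The common stabilizer of the points of an orbit `O` (well defined since the acting
group is abelian). -/
def stabOrbit (s t : E → V) (k : ℕ) (j' : E → ℚ)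
    (O : Quotient (orbitSetoid s t k j')) : AddSubgroup (E → ZMod 2) :=
  Quotient.liftOn O (fun j => stab s t k (j : E → ℚ)) (by
    rintro j₁ j₂ ⟨lam, hlam, h⟩
    exact stab_congr s t k _ _ lam h)


namespace CohomAux

variable (s t : E → V) (k : ℕ) (j' : E → ℚ)

/-- Base point of an orbit. -/
noncomputable def bpt (O : Quotient (orbitSetoid s t k j')) : E → ℚ :=
  ((Quotient.out O : ↥(QCG s t k j')) : E → ℚ)

theorem bpt_mem (O : Quotient (orbitSetoid s t k j')) :
    bpt s t k j' O ∈ QCG s t k j' := (Quotient.out O).2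

theorem stabOrbit_eq (O : Quotient (orbitSetoid s t k j')) :
    stabOrbit s t k j' O = stab s t k (bpt s t k j' O) := by
  conv_lhs => rw [← Quotient.out_eq O]
  rfl

theorem orbit_eq_of (O O' : Quotient (orbitSetoid s t k j'))
    (l l' : E → ZMod 2) (hl : l ∈ cycleSpace s t) (hl' : l' ∈ cycleSpace s t)
    (h : actW k l (bpt s t k j' O) = actW k l' (bpt s t k j' O')) : O = O' := by
  letI := orbitSetoid s t k j'
  have hb : actW k (l' + l) (bpt s t k j' O) = bpt s t k j' O' := by
    rw [actW_add, h, ← actW_add, add_self_zmod2, actW_zero]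
  have hrel : Quotient.out O ≈ Quotient.out O' := ⟨l' + l, add_mem hl' hl, hb⟩
  rw [← Quotient.out_eq O, ← Quotient.out_eq O']
  exact Quotient.sound hrel

/-- `x` lies in the saturation of `QCG`: it is reachable from some orbit base point. -/
def Sat (x : E → ℚ) : Prop :=
  ∃ O : Quotient (orbitSetoid s t k j'), ∃ lam ∈ cycleSpace s t,
    actW k lam (bpt s t k j' O) = x

noncomputable def pO {x : E → ℚ} (h : Sat s t k j' x) :
    Quotient (orbitSetoid s t k j') := h.choose

noncomputable def pL {x : E → ℚ} (h : Sat s t k j' x) : E → ZMod 2 :=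
  h.choose_spec.choose

theorem pL_mem {x : E → ℚ} (h : Sat s t k j' x) :
    pL s t k j' h ∈ cycleSpace s t := h.choose_spec.choose_spec.1

theorem pL_act {x : E → ℚ} (h : Sat s t k j' x) :
    actW k (pL s t k j' h) (bpt s t k j' (pO s t k j' h)) = x :=
  h.choose_spec.choose_spec.2

theorem pL_congr {x y : E → ℚ} (e : x = y) (h : Sat s t k j' x) (h' : Sat s t k j' y) :
    pL s t k j' h = pL s t k j' h' := by subst e; rfl

theorem sat_of_mem {x : E → ℚ} (hx : x ∈ QCG s t k j') : Sat s t k j' x := by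
  letI := orbitSetoid s t k j'
  obtain ⟨lam, hlam, hact⟩ :=
    Quotient.exact (Quotient.out_eq (⟦(⟨x, hx⟩ : ↥(QCG s t k j'))⟧ :
      Quotient (orbitSetoid s t k j')))
  exact ⟨⟦(⟨x, hx⟩ : ↥(QCG s t k j'))⟧, lam, hlam, hact⟩

theorem sat_act {x : E → ℚ} {lam : E → ZMod 2} (hx : Sat s t k j' x)
    (hl : lam ∈ cycleSpace s t) : Sat s t k j' (actW k lam x) :=
  ⟨pO s t k j' hx, lam + pL s t k j' hx, add_mem hl (pL_mem s t k j' hx),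
    by rw [actW_add, pL_act]⟩

theorem zmod_fun_calc (P q r l l' : E → ZMod 2) :
    (P + (l + q)) + (q + (l' + r)) = P + ((l + l') + r) := by
  funext f
  have h : ∀ P q r l l' : ZMod 2, (P + (l + q)) + (q + (l' + r)) = P + ((l + l') + r) := by
    decide
  exact h _ _ _ _ _

theorem zmod_fun_calc2 (p m : E → ZMod 2) : p + (m + p) = m := by
  funext f
  have h : ∀ p m : ZMod 2, p + (m + p) = m := by decide
  exact h _ _

theorem zmod_fun_calc3 (l p : E → ZMod 2) : l + (p + l) = p := by
  funext f
  have h : ∀ l p : ZMod 2, l + (p + l) = p := by decide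
  exact h _ _

theorem mem_stab_of_mem_stabOrbit {O : Quotient (orbitSetoid s t k j')}
    {l : E → ZMod 2} (h : l ∈ stabOrbit s t k j' O) :
    l ∈ stab s t k (bpt s t k j' O) := by
  rw [← stabOrbit_eq]; exact h

theorem coc_zero {δ : (E → ZMod 2) → (E → ℚ) → ℂˣ} (hδ : IsCocycle s t k j' δ)
    {j : E → ℚ} (hj : j ∈ QCG s t k j') : δ 0 j = 1 := by
  have h := hδ 0 (zero_mem _) 0 (zero_mem _) j hj
  rw [add_zero, actW_zero] at h
  exact (left_eq_mul.mp h)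

/-- Restriction of a cocycle to the stabilizer of each orbit base point. -/
noncomputable def Phi : ↥(Coc s t k j') →*
    ∀ O : Quotient (orbitSetoid s t k j'),
      Multiplicative ↥(stabOrbit s t k j' O) →* ℂˣ where
  toFun δ O :=
    { toFun := fun μ => (δ : (E → ZMod 2) → (E → ℚ) → ℂˣ)
        ((Multiplicative.toAdd μ : ↥(stabOrbit s t k j' O)) : E → ZMod 2)
        (bpt s t k j' O)
      map_one' := by
        have hδ : IsCocycle s t k j' ↑δ := δ.2
        simpa using coc_zero s t k j' hδ (bpt_mem s t k j' O)
      map_mul' := by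
        intro μ ν
        have hδ : IsCocycle s t k j' ↑δ := δ.2
        obtain ⟨hμ1, hμ2⟩ := mem_stab_of_mem_stabOrbit s t k j' (Multiplicative.toAdd μ).2
        obtain ⟨hν1, hν2⟩ := mem_stab_of_mem_stabOrbit s t k j' (Multiplicative.toAdd ν).2
        have h := hδ _ hμ1 _ hν1 _ (bpt_mem s t k j' O)
        rw [hν2] at h
        simpa using h }
  map_one' := by
    funext O
    ext μ
    rfl
  map_mul' := by
    intro δ₁ δ₂
    funext O
    ext μ
    rfl

theorem phi_apply (δ : ↥(Coc s t k j')) (O : Quotient (orbitSetoid s t k j'))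
    (μ : Multiplicative ↥(stabOrbit s t k j' O)) :
    Phi s t k j' δ O μ = (δ : (E → ZMod 2) → (E → ℚ) → ℂˣ)
      ((Multiplicative.toAdd μ : ↥(stabOrbit s t k j' O)) : E → ZMod 2)
      (bpt s t k j' O) := rfl

theorem mem_ker_iff (δ : ↥(Coc s t k j')) :
    Phi s t k j' δ = 1 ↔ ∀ O : Quotient (orbitSetoid s t k j'),
      ∀ lam, lam ∈ stab s t k (bpt s t k j' O) →
      (δ : (E → ZMod 2) → (E → ℚ) → ℂˣ) lam (bpt s t k j' O) = 1 := by
  constructor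
  · intro h O lam hlam
    have hlam' : lam ∈ stabOrbit s t k j' O := by
      rw [stabOrbit_eq]; exact hlam
    have h1 := congrFun h O
    have h2 := DFunLike.congr_fun h1
      (Multiplicative.ofAdd (⟨lam, hlam'⟩ : ↥(stabOrbit s t k j' O)))
    rw [phi_apply] at h2
    simpa using h2
  · intro h
    funext O
    refine MonoidHom.ext fun μ => Units.ext ?_
    have hμ := mem_stab_of_mem_stabOrbit s t k j' (Multiplicative.toAdd μ).2
    have h2 := h O _ hμ
    simp only [Pi.one_apply, MonoidHom.one_apply]
    rw [phi_apply, h2]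

theorem ker_eq : (Phi s t k j').ker = Cob s t k j' := by
  ext δ
  rw [MonoidHom.mem_ker, mem_ker_iff]
  constructor
  · intro h
    have hδ : IsCocycle s t k j' ↑δ := δ.2
    classical
    refine ⟨fun x => if hx : Sat s t k j' x then
      (δ : (E → ZMod 2) → (E → ℚ) → ℂˣ) (pL s t k j' hx) (bpt s t k j' (pO s t k j' hx))
      else 1, ?_⟩
    have key : ∀ (x : E → ℚ) (O : Quotient (orbitSetoid s t k j')) (l : E → ZMod 2),
        l ∈ cycleSpace s t → actW k l (bpt s t k j' O) = x → ∀ (hx : Sat s t k j' x),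
        (δ : (E → ZMod 2) → (E → ℚ) → ℂˣ) l (bpt s t k j' O) =
        (δ : (E → ZMod 2) → (E → ℚ) → ℂˣ) (pL s t k j' hx)
          (bpt s t k j' (pO s t k j' hx)) := by
      intro x O l hl hact hx
      have hO : pO s t k j' hx = O :=
        orbit_eq_of s t k j' _ O _ l (pL_mem s t k j' hx) hl (by rw [pL_act, hact])
      have hμstab : pL s t k j' hx + l ∈ stab s t k (bpt s t k j' O) := by
        refine ⟨add_mem (pL_mem s t k j' hx) hl, ?_⟩
        rw [actW_add, hact]
        have h2 := pL_act s t k j' hx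
        rw [hO] at h2
        have h3 : actW k (pL s t k j' hx) (actW k (pL s t k j' hx) (bpt s t k j' O))
            = bpt s t k j' O := by
          rw [← actW_add, add_self_zmod2, actW_zero]
        rw [h2] at h3
        exact h3
      have h1 := h O (pL s t k j' hx + l) hμstab
      have hco := hδ l hl (pL s t k j' hx + l) hμstab.1 _ (bpt_mem s t k j' O)
      rw [hμstab.2, h1, mul_one, zmod_fun_calc3] at hco
      rw [← hco, hO]
    intro lam hlam j hj
    have hsj : Sat s t k j' j := sat_of_mem s t k j' hj
    have hsl : Sat s t k j' (actW k lam j) := sat_act s t k j' hsj hlam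
    simp only [dif_pos hsl, dif_pos hsj]
    have h2 := key (actW k lam j) (pO s t k j' hsj) (lam + pL s t k j' hsj)
      (add_mem hlam (pL_mem s t k j' hsj)) (by rw [actW_add, pL_act]) hsl
    have hco := hδ lam hlam (pL s t k j' hsj) (pL_mem s t k j' hsj) _
      (bpt_mem s t k j' (pO s t k j' hsj))
    rw [pL_act] at hco
    rw [hco] at h2
    rw [← h2, mul_inv_cancel_right]
  · rintro ⟨c, hc⟩ O lam hlam
    have h1 := hc lam hlam.1 _ (bpt_mem s t k j' O)
    rw [hlam.2] at h1
    rw [h1, mul_inv_cancel]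

noncomputable def zeta {x : E → ℚ} {lam : E → ZMod 2} (hx : Sat s t k j' x)
    (hl : lam ∈ cycleSpace s t) : E → ZMod 2 :=
  pL s t k j' (sat_act s t k j' hx hl) + (lam + pL s t k j' hx)

theorem pO_act {x : E → ℚ} {lam : E → ZMod 2} (hx : Sat s t k j' x)
    (hl : lam ∈ cycleSpace s t) :
    pO s t k j' (sat_act s t k j' hx hl) = pO s t k j' hx :=
  orbit_eq_of s t k j' _ _ _ (lam + pL s t k j' hx)
    (pL_mem s t k j' (sat_act s t k j' hx hl)) (add_mem hl (pL_mem s t k j' hx))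
    (by rw [pL_act, actW_add, pL_act])

theorem zeta_stab {x : E → ℚ} {lam : E → ZMod 2} (hx : Sat s t k j' x)
    (hl : lam ∈ cycleSpace s t) :
    zeta s t k j' hx hl ∈ stabOrbit s t k j' (pO s t k j' hx) := by
  rw [stabOrbit_eq]
  refine ⟨add_mem (pL_mem s t k j' (sat_act s t k j' hx hl))
    (add_mem hl (pL_mem s t k j' hx)), ?_⟩
  show actW k _ _ = _
  rw [zeta, actW_add, actW_add, pL_act]
  have h1 := pL_act s t k j' (sat_act s t k j' hx hl)
  have h3 : actW k (pL s t k j' (sat_act s t k j' hx hl))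
      (actW k (pL s t k j' (sat_act s t k j' hx hl))
        (bpt s t k j' (pO s t k j' (sat_act s t k j' hx hl))))
      = bpt s t k j' (pO s t k j' (sat_act s t k j' hx hl)) := by
    rw [← actW_add, add_self_zmod2, actW_zero]
  rw [h1] at h3
  rw [h3, pO_act]
  exact hl

theorem chi_congr (χ : ∀ O : Quotient (orbitSetoid s t k j'),
      Multiplicative ↥(stabOrbit s t k j' O) →* ℂˣ)
    {O O' : Quotient (orbitSetoid s t k j')} (e : O = O')
    {a : ↥(stabOrbit s t k j' O)} {b : ↥(stabOrbit s t k j' O')}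
    (hab : (a : E → ZMod 2) = (b : E → ZMod 2)) :
    χ O (Multiplicative.ofAdd a) = χ O' (Multiplicative.ofAdd b) := by
  subst e
  exact congrArg _ (congrArg Multiplicative.ofAdd (Subtype.ext hab))

theorem phi_surj : Function.Surjective (Phi s t k j') := by
  classical
  intro χ
  have hcoc : IsCocycle s t k j' (fun lam x =>
      if h : Sat s t k j' x ∧ lam ∈ cycleSpace s t then
        χ (pO s t k j' h.1)
          (Multiplicative.ofAdd ⟨zeta s t k j' h.1 h.2, zeta_stab s t k j' h.1 h.2⟩)
      else 1) := by
    intro lam hlam lam' hlam' x hx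
    have hsx : Sat s t k j' x := sat_of_mem s t k j' hx
    have hs' : Sat s t k j' (actW k lam' x) := sat_act s t k j' hsx hlam'
    simp only [dif_pos (⟨hsx, add_mem hlam hlam'⟩ : _ ∧ _),
      dif_pos (⟨hs', hlam⟩ : _ ∧ _), dif_pos (⟨hsx, hlam'⟩ : _ ∧ _)]
    rw [chi_congr s t k j' χ (pO_act s t k j' hsx hlam')
      (a := ⟨zeta s t k j' hs' hlam,
        zeta_stab s t k j' hs' hlam⟩)
      (b := ⟨zeta s t k j' hs' hlam,
        (pO_act s t k j' hsx hlam') ▸ zeta_stab s t k j' hs' hlam⟩) rfl]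
    rw [← map_mul, ← ofAdd_add]
    refine chi_congr s t k j' χ rfl ?_
    show zeta s t k j' hsx (add_mem hlam hlam')
      = zeta s t k j' hs' hlam + zeta s t k j' hsx hlam'
    rw [zeta, zeta, zeta, zmod_fun_calc]
    have e : actW k lam (actW k lam' x) = actW k (lam + lam') x := (actW_add k lam lam' x).symm
    rw [pL_congr s t k j' e (sat_act s t k j' hs' hlam)
      (sat_act s t k j' hsx (add_mem hlam hlam'))]
  refine ⟨⟨fun lam x =>
      if h : Sat s t k j' x ∧ lam ∈ cycleSpace s t then
        χ (pO s t k j' h.1)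
          (Multiplicative.ofAdd ⟨zeta s t k j' h.1 h.2, zeta_stab s t k j' h.1 h.2⟩)
      else 1, hcoc⟩, ?_⟩
  funext O
  refine MonoidHom.ext fun μ => Units.ext ?_
  have hsb : Sat s t k j' (bpt s t k j' O) := ⟨O, 0, zero_mem _, actW_zero k _⟩
  obtain ⟨hμ1, hμ2⟩ := mem_stab_of_mem_stabOrbit s t k j' (Multiplicative.toAdd μ).2
  rw [phi_apply]
  show ((if h : Sat s t k j' (bpt s t k j' O) ∧
      ((Multiplicative.toAdd μ : ↥(stabOrbit s t k j' O)) : E → ZMod 2) ∈ cycleSpace s t then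
        χ (pO s t k j' h.1)
          (Multiplicative.ofAdd ⟨zeta s t k j' h.1 h.2, zeta_stab s t k j' h.1 h.2⟩)
      else 1 : ℂˣ) : ℂ) = _
  rw [dif_pos (⟨hsb, hμ1⟩ : _ ∧ _)]
  have hO : pO s t k j' hsb = O :=
    orbit_eq_of s t k j' _ _ _ 0 (pL_mem s t k j' hsb) (zero_mem _)
      (by rw [pL_act, actW_zero])
  have hz : zeta s t k j' hsb hμ1
      = ((Multiplicative.toAdd μ : ↥(stabOrbit s t k j' O)) : E → ZMod 2) := by
    rw [zeta, pL_congr s t k j' hμ2 (sat_act s t k j' hsb hμ1) hsb, zmod_fun_calc2]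
  rw [chi_congr s t k j' χ hO (b := Multiplicative.toAdd μ) hz, ofAdd_toAdd]

end CohomAux

attribute [irreducible] CohomAux.Phi CohomAux.bpt CohomAux.pO CohomAux.pL CohomAux.zeta stabOrbit orbitSetoid

set_option maxHeartbeats 1000000 in
/-- the quotient of the abelian group of twisted 1-cocycles by the subgroup
of coboundaries is isomorphic, as an abelian group, to the product over all orbits `O` of
the action of `Z(Γ)` on `QCG_k(Γ; j')` of the character groups `Hom(Stab(O), ℂˣ)`. -/
theorem first_cohomology_structure
    (s t : E → V) (k : ℕ) (j' : E → ℚ)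
    (hut : Unitrivalent s t) (hk : 0 < k) :
    Nonempty ((↥(Coc s t k j') ⧸ Cob s t k j') ≃*
      ∀ O : Quotient (orbitSetoid s t k j'),
        Multiplicative ↥(stabOrbit s t k j' O) →* ℂˣ) := by
  have h1 : (↥(Coc s t k j') ⧸ Cob s t k j') ≃*
      (↥(Coc s t k j') ⧸ (CohomAux.Phi s t k j').ker) :=
    QuotientGroup.quotientMulEquivOfEq (CohomAux.ker_eq s t k j').symm
  have h2 : (↥(Coc s t k j') ⧸ (CohomAux.Phi s t k j').ker) ≃*
      (∀ O : Quotient (orbitSetoid s t k j'),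
        Multiplicative ↥(stabOrbit s t k j' O) →* ℂˣ) :=
    by
    have h3 := QuotientGroup.quotientKerEquivRange (G := ↥(Coc s t k j'))
      (H := ∀ O : Quotient (orbitSetoid s t k j'),
        Multiplicative ↥(stabOrbit s t k j' O) →* ℂˣ) (CohomAux.Phi s t k j')
    have hr : (MonoidHom.range (G := ↥(Coc s t k j'))
      (N := ∀ O : Quotient (orbitSetoid s t k j'),
        Multiplicative ↥(stabOrbit s t k j' O) →* ℂˣ) (CohomAux.Phi s t k j')) = ⊤ :=
      MonoidHom.range_eq_top_of_surjective _ (CohomAux.phi_surj s t k j')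
    have h4 : (↥(MonoidHom.range (G := ↥(Coc s t k j'))
      (N := ∀ O : Quotient (orbitSetoid s t k j'),
        Multiplicative ↥(stabOrbit s t k j' O) →* ℂˣ) (CohomAux.Phi s t k j'))) ≃*
        (∀ O : Quotient (orbitSetoid s t k j'),
          Multiplicative ↥(stabOrbit s t k j' O) →* ℂˣ) :=
      (MulEquiv.subgroupCongr hr).trans Subgroup.topEquiv
    exact h3.trans h4
  exact ⟨h1.trans h2⟩
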